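/- Let n ≥ 1, s ∈ ℕ, q ∈ (1, ∞], x₀ ∈ ℝⁿ and r > 0. If a ∈ L^q(ℝⁿ; ℂ) is supported in the closed ball B = B(x₀, r) and satisfies ∫_{ℝⁿ} a(ξ) ξ^α dξ = 0 for every multi-index α with |α| ≤ s, then a is integrable and for every x ∈ ℝⁿ one has |â(x)| ≤ |B|^{1−1/q} ‖a‖_{L^q} · min{1, (2π r |x|)^{s+1}/(s+1)!}, where |B| denotes the Lebesgue measure of B. -/

import Mathlib

open MeasureTheory Real Filter Topology Function Finset
open scoped ENNReal FourierTransform NNReal RealInnerProductSpace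

lemma exp_I_taylor_bound_nonneg : ∀ (m : ℕ) (t : ℝ), 0 ≤ t →
    ‖Complex.exp (t * Complex.I) - ∑ k ∈ Finset.range m, ((t : ℂ) * Complex.I) ^ k / k.factorial‖
      ≤ t ^ m / m.factorial := by
  intro m
  induction m with
  | zero =>
    intro t ht
    simp [Complex.norm_exp]
  | succ m ih =>
    intro t ht
    set g : ℝ → ℂ := fun v =>
      Complex.exp (v * Complex.I) - ∑ k ∈ Finset.range (m+1), ((v : ℂ) * Complex.I) ^ k / k.factorial with hg
    have hderiv : ∀ u : ℝ, HasDerivAt g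
        (Complex.I * (Complex.exp (u * Complex.I)
          - ∑ k ∈ Finset.range m, ((u : ℂ) * Complex.I) ^ k / k.factorial)) u := by
      intro u
      have h1 : HasDerivAt (fun v : ℝ => Complex.exp (v * Complex.I))
          (Complex.I * Complex.exp (u * Complex.I)) u := by
        have := ((Complex.hasDerivAt_exp ((u:ℂ) * Complex.I)).comp (u:ℂ)
          ((hasDerivAt_id (u:ℂ)).mul_const Complex.I)).comp_ofReal
        simpa [mul_comm] using this
      have h3 : ∀ k : ℕ, HasDerivAt (fun v : ℝ => ((v:ℂ) * Complex.I) ^ k / k.factorial)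
          ((k * ((u:ℂ)*Complex.I)^(k-1) * Complex.I) / k.factorial) u := by
        intro k
        have := (((hasDerivAt_pow k ((u:ℂ)*Complex.I)).comp (u:ℂ)
          ((hasDerivAt_id (u:ℂ)).mul_const Complex.I)).div_const ((k.factorial : ℂ))).comp_ofReal
        simpa [mul_comm, mul_assoc] using this
      have h2 : HasDerivAt (fun v : ℝ => ∑ k ∈ Finset.range (m+1), ((v:ℂ) * Complex.I) ^ k / k.factorial)
          (∑ k ∈ Finset.range (m+1), (k * ((u:ℂ)*Complex.I)^(k-1) * Complex.I) / k.factorial) u :=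
        HasDerivAt.fun_sum (fun k _ => h3 k)
      have hsum : ∑ k ∈ Finset.range (m+1), ((k : ℂ) * ((u:ℂ)*Complex.I)^(k-1) * Complex.I) / k.factorial
          = ∑ k ∈ Finset.range m, ((u:ℂ) * Complex.I) ^ k / k.factorial * Complex.I := by
        rw [Finset.sum_range_succ']
        simp only [Nat.cast_zero, zero_mul, zero_div, add_zero, Nat.add_sub_cancel]
        refine Finset.sum_congr rfl fun k _ => ?_
        have hne : ((k:ℂ)+1) ≠ 0 := Nat.cast_add_one_ne_zero k
        have hfac : ((k+1).factorial : ℂ) = ((k:ℂ)+1) * (k.factorial : ℂ) := by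
          rw [Nat.factorial_succ]; push_cast; ring
        have hfk : (k.factorial : ℂ) ≠ 0 := by exact_mod_cast k.factorial_ne_zero
        rw [hfac]
        push_cast
        field_simp
      have := h1.sub h2
      rw [hsum] at this
      refine HasDerivAt.congr_deriv this ?_
      rw [mul_sub, Finset.mul_sum]
      congr 1
      refine Finset.sum_congr rfl fun k _ => ?_
      ring
    have h0 : g 0 = 0 := by
      rw [hg]
      simp only [Complex.ofReal_zero, zero_mul, Complex.exp_zero]
      rw [Finset.sum_range_succ']
      simp
    have hFTC : ∫ u in (0:ℝ)..t, Complex.I * (Complex.exp (u * Complex.I)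
          - ∑ k ∈ Finset.range m, ((u : ℂ) * Complex.I) ^ k / k.factorial) = g t - g 0 := by
      apply intervalIntegral.integral_eq_sub_of_hasDerivAt (fun u _ => hderiv u)
      apply Continuous.intervalIntegrable
      fun_prop
    have key : g t = ∫ u in (0:ℝ)..t, Complex.I * (Complex.exp (u * Complex.I)
          - ∑ k ∈ Finset.range m, ((u : ℂ) * Complex.I) ^ k / k.factorial) := by
      rw [hFTC, h0, sub_zero]
    calc ‖g t‖ = ‖∫ u in (0:ℝ)..t, Complex.I * (Complex.exp (u * Complex.I)
          - ∑ k ∈ Finset.range m, ((u : ℂ) * Complex.I) ^ k / k.factorial)‖ := by rw [key]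
      _ ≤ ∫ u in (0:ℝ)..t, ‖Complex.I * (Complex.exp (u * Complex.I)
          - ∑ k ∈ Finset.range m, ((u : ℂ) * Complex.I) ^ k / k.factorial)‖ :=
        intervalIntegral.norm_integral_le_integral_norm ht
      _ ≤ ∫ u in (0:ℝ)..t, u ^ m / m.factorial := by
        apply intervalIntegral.integral_mono_on ht
        · apply Continuous.intervalIntegrable; fun_prop
        · apply Continuous.intervalIntegrable; fun_prop
        · intro u hu
          rw [norm_mul, Complex.norm_I, one_mul]
          exact ih u hu.1
      _ = t ^ (m+1) / (m+1).factorial := by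
        rw [intervalIntegral.integral_div, integral_pow]
        rw [Nat.factorial_succ]
        push_cast
        have h1 : ((m:ℝ)+1) ≠ 0 := by positivity
        have h2 : (m.factorial : ℝ) ≠ 0 := by exact_mod_cast m.factorial_ne_zero
        field_simp
        simp

lemma exp_I_taylor_bound (m : ℕ) (t : ℝ) :
    ‖Complex.exp (t * Complex.I) - ∑ k ∈ Finset.range m, ((t : ℂ) * Complex.I) ^ k / k.factorial‖
      ≤ |t| ^ m / m.factorial := by
  rcases le_total 0 t with ht | ht
  · rw [abs_of_nonneg ht]; exact exp_I_taylor_bound_nonneg m t ht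
  · have h := exp_I_taylor_bound_nonneg m (-t) (by linarith)
    rw [abs_of_nonpos ht]
    have hconj : Complex.exp (t * Complex.I) - ∑ k ∈ Finset.range m, ((t : ℂ) * Complex.I) ^ k / k.factorial
        = (starRingEnd ℂ) (Complex.exp ((-t : ℝ) * Complex.I)
          - ∑ k ∈ Finset.range m, (((-t : ℝ) : ℂ) * Complex.I) ^ k / k.factorial) := by
      rw [map_sub, map_sum, ← Complex.exp_conj]
      congr 1
      · congr 1
        simp [Complex.conj_ofReal]
      · refine Finset.sum_congr rfl fun k _ => ?_
        rw [map_div₀, map_pow, map_mul]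
        simp [Complex.conj_ofReal, Complex.conj_I]
    rw [hconj, RCLike.norm_conj]
    simpa using h


lemma coord_abs_le_norm {n : ℕ} (y : EuclideanSpace ℝ (Fin n)) (i : Fin n) : |y i| ≤ ‖y‖ := by
  rw [EuclideanSpace.norm_eq, ← Real.sqrt_sq_eq_abs]
  apply Real.sqrt_le_sqrt
  have := Finset.single_le_sum (f := fun j => ‖y j‖ ^ 2) (fun j _ => sq_nonneg _) (Finset.mem_univ i)
  simpa [Real.norm_eq_abs, sq_abs] using this


theorem fourier_Lq_atom_bound {n : ℕ} (hn : 1 ≤ n) (s : ℕ) (q : ℝ≥0∞) (hq : 1 < q)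
    (x₀ : EuclideanSpace ℝ (Fin n)) (r : ℝ) (hr : 0 < r)
    (a : EuclideanSpace ℝ (Fin n) → ℂ) (ha : MemLp a q)
    (hsupp : Function.support a ⊆ Metric.closedBall x₀ r)
    (hmom : ∀ α : Fin n → ℕ, (∑ i, α i) ≤ s →
      ∫ ξ : EuclideanSpace ℝ (Fin n), ((∏ i, (ξ i) ^ (α i) : ℝ) : ℂ) * a ξ = 0) :
    Integrable a ∧
      ∀ x : EuclideanSpace ℝ (Fin n),
        (‖𝓕 a x‖₊ : ℝ≥0∞) ≤ (volume (Metric.closedBall x₀ r)) ^ (1 - (q⁻¹).toReal) *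
          eLpNorm a q volume *
          ENNReal.ofReal (min 1 ((2 * π * r * ‖x‖) ^ (s + 1) / (Nat.factorial (s + 1)))) := by
  set B := Metric.closedBall x₀ r with hB
  have hq1 : (1 : ℝ≥0∞) ≤ q := hq.le
  have hmeas : AEStronglyMeasurable a volume := ha.aestronglyMeasurable
  -- integrability
  haveI : IsFiniteMeasure (volume.restrict B) :=
    ⟨by rw [Measure.restrict_apply_univ]; exact measure_closedBall_lt_top⟩
  have hBint : IntegrableOn a B := by
    have h1 : MemLp a q (volume.restrict B) := ha.restrict B
    exact memLp_one_iff_integrable.mp (h1.mono_exponent hq1)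
  have hInt : Integrable a := (integrableOn_iff_integrable_of_support_subset hsupp).mp hBint
  -- Hölder bound
  have hC : eLpNorm a 1 volume ≤ volume B ^ (1 - (q⁻¹).toReal) * eLpNorm a q volume := by
    rw [← eLpNorm_restrict_eq_of_support_subset hsupp (p := 1)]
    have h2 := eLpNorm_le_eLpNorm_mul_rpow_measure_univ (p := 1) (q := q) hq1
      (hmeas.restrict (s := B))
    rw [Measure.restrict_apply_univ] at h2
    have hexp : 1 / (1 : ℝ≥0∞).toReal - 1 / q.toReal = 1 - (q⁻¹).toReal := by
      simp [ENNReal.toReal_inv, one_div]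
    rw [hexp] at h2
    refine h2.trans ?_
    rw [mul_comm]
    exact mul_le_mul_right (eLpNorm_mono_measure a Measure.restrict_le_self) _
  -- monomial integrability
  have hmonoInt : ∀ α : Fin n → ℕ,
      Integrable (fun ξ : EuclideanSpace ℝ (Fin n) => ((∏ i, (ξ i) ^ (α i) : ℝ) : ℂ) * a ξ) := by
    intro α
    set M : ℝ := ∏ i, (|x₀ i| + r) ^ (α i) with hM
    apply Integrable.mono' (hInt.norm.const_mul M)
    · apply AEStronglyMeasurable.mul _ hmeas
      apply Continuous.aestronglyMeasurable
      fun_prop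
    · filter_upwards with ξ
      rw [norm_mul]
      by_cases hz : a ξ = 0
      · simp [hz]
      · have hmem : ξ ∈ B := hsupp hz
        have h2 : ‖ξ - x₀‖ ≤ r := by rwa [Metric.mem_closedBall, dist_eq_norm] at hmem
        have hb : ∀ i, |ξ i| ≤ |x₀ i| + r := by
          intro i
          have h1 : |ξ i - x₀ i| ≤ ‖ξ - x₀‖ := by
            have := coord_abs_le_norm (ξ - x₀) i
            simpa using this
          calc |ξ i| = |x₀ i + (ξ i - x₀ i)| := by ring_nf
            _ ≤ |x₀ i| + |ξ i - x₀ i| := abs_add_le _ _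
            _ ≤ |x₀ i| + r := by linarith
        have hbnd : ‖((∏ i, (ξ i) ^ (α i) : ℝ) : ℂ)‖ ≤ M := by
          rw [Complex.norm_real, Real.norm_eq_abs, Finset.abs_prod]
          apply Finset.prod_le_prod (fun i _ => by positivity)
          intro i _
          rw [abs_pow]
          exact pow_le_pow_left₀ (abs_nonneg _) (hb i) _
        exact mul_le_mul_of_nonneg_right hbnd (norm_nonneg _)
  -- polynomial vanishing
  have hpoly : ∀ p : MvPolynomial (Fin n) ℂ,
      Integrable (fun ξ : EuclideanSpace ℝ (Fin n) =>
        (MvPolynomial.eval (fun i => ((ξ i : ℝ) : ℂ)) p) * a ξ) ∧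
      (p.totalDegree ≤ s → ∫ ξ : EuclideanSpace ℝ (Fin n),
        (MvPolynomial.eval (fun i => ((ξ i : ℝ) : ℂ)) p) * a ξ = 0) := by
    intro p
    have heval : (fun ξ : EuclideanSpace ℝ (Fin n) =>
        (MvPolynomial.eval (fun i => ((ξ i : ℝ) : ℂ)) p) * a ξ)
        = fun ξ => ∑ d ∈ p.support, p.coeff d * (((∏ i, (ξ i) ^ (d i) : ℝ) : ℂ) * a ξ) := by
      funext ξ
      rw [MvPolynomial.eval_eq', Finset.sum_mul]
      refine Finset.sum_congr rfl fun d _ => ?_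
      push_cast
      ring
    constructor
    · rw [heval]
      exact integrable_finset_sum _ (fun (d : Fin n →₀ ℕ) _ => (hmonoInt (fun i => d i)).const_mul (p.coeff d))
    · intro hdeg
      rw [heval, integral_finset_sum _ (fun (d : Fin n →₀ ℕ) _ => (hmonoInt (fun i => d i)).const_mul (p.coeff d))]
      apply Finset.sum_eq_zero
      intro d hd
      rw [integral_const_mul, hmom (fun i => d i) ?_, mul_zero]
      have h1 := MvPolynomial.le_totalDegree hd
      have h2 : (d.sum fun _ e => e) = ∑ i, d i := by
        rw [Finsupp.sum_fintype]
        intro i; rfl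
      show (∑ i, d i) ≤ s
      omega
  refine ⟨hInt, fun x => ?_⟩
  -- trivial bound
  have hT : (‖𝓕 a x‖₊ : ℝ≥0∞) ≤ eLpNorm a 1 volume := by
    have h1 : ‖𝓕 a x‖ ≤ ∫ ξ, ‖a ξ‖ :=
      VectorFourier.norm_fourierIntegral_le_integral_norm _ _ _ _ _
    calc (‖𝓕 a x‖₊ : ℝ≥0∞) = ENNReal.ofReal ‖𝓕 a x‖ := (ofReal_norm _).symm
      _ ≤ ENNReal.ofReal (∫ ξ, ‖a ξ‖) := ENNReal.ofReal_le_ofReal h1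
      _ = ∫⁻ ξ, ‖a ξ‖₊ := ofReal_integral_norm_eq_lintegral_enorm hInt
      _ = eLpNorm a 1 volume := (eLpNorm_one_eq_lintegral_enorm (f := a) (μ := volume)).symm
  -- main oscillation bound
  set D : ℝ := (2 * π * r * ‖x‖) ^ (s + 1) / (Nat.factorial (s + 1)) with hD
  have hD0 : 0 ≤ D := by positivity
  set θ₀ : ℝ := -(2 * π * ⟪x₀, x⟫) with hθ₀
  set c : ℂ := Complex.exp ((θ₀ : ℂ) * Complex.I) with hc
  have hcnorm : ‖c‖ = 1 := by
    rw [hc, Complex.norm_exp]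
    simp
  set u : EuclideanSpace ℝ (Fin n) → ℝ := fun ξ => -(2 * π * ⟪ξ - x₀, x⟫) with hu
  set S : MvPolynomial (Fin n) ℂ :=
    ∑ i, MvPolynomial.C ((x i : ℂ)) * (MvPolynomial.X i - MvPolynomial.C ((x₀ i : ℂ))) with hS
  set Q : MvPolynomial (Fin n) ℂ :=
    ∑ k ∈ Finset.range (s+1),
      MvPolynomial.C (c * Complex.I ^ k * ((-(2*π) : ℝ) : ℂ) ^ k / k.factorial) * S ^ k with hQ
  have hevalS : ∀ ξ : EuclideanSpace ℝ (Fin n),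
      MvPolynomial.eval (fun i => ((ξ i : ℝ) : ℂ)) S
        = ((∑ i, x i * (ξ i - x₀ i) : ℝ) : ℂ) := by
    intro ξ
    rw [hS, map_sum]
    push_cast
    refine Finset.sum_congr rfl fun i _ => ?_
    simp
  have hinner : ∀ ξ : EuclideanSpace ℝ (Fin n), ⟪ξ - x₀, x⟫ = ∑ i, x i * (ξ i - x₀ i) := by
    intro ξ
    rw [PiLp.inner_apply]
    refine Finset.sum_congr rfl fun i _ => ?_
    simp [RCLike.inner_apply, mul_comm]
  have hevalQ : ∀ ξ : EuclideanSpace ℝ (Fin n),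
      MvPolynomial.eval (fun i => ((ξ i : ℝ) : ℂ)) Q
        = c * ∑ k ∈ Finset.range (s+1), ((u ξ : ℝ) : ℂ) ^ k * Complex.I ^ k / k.factorial := by
    intro ξ
    rw [hQ, map_sum, Finset.mul_sum]
    refine Finset.sum_congr rfl fun k _ => ?_
    rw [map_mul, map_pow, MvPolynomial.eval_C, hevalS]
    have : ((u ξ : ℝ) : ℂ) = ((-(2*π) : ℝ) : ℂ) * ((∑ i, x i * (ξ i - x₀ i) : ℝ) : ℂ) := by
      rw [hu]
      push_cast [hinner ξ]
      ring
    rw [this]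
    ring
  have hdegQ : Q.totalDegree ≤ s := by
    rw [hQ]
    apply (MvPolynomial.totalDegree_finset_sum _ _).trans
    apply Finset.sup_le
    intro k hk
    apply (MvPolynomial.totalDegree_mul _ _).trans
    rw [MvPolynomial.totalDegree_C, zero_add]
    apply (MvPolynomial.totalDegree_pow _ _).trans
    have hdS : S.totalDegree ≤ 1 := by
      rw [hS]
      apply (MvPolynomial.totalDegree_finset_sum _ _).trans
      apply Finset.sup_le
      intro i _
      apply (MvPolynomial.totalDegree_mul _ _).trans
      rw [MvPolynomial.totalDegree_C, zero_add]
      apply (MvPolynomial.totalDegree_sub _ _).trans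
      simp [MvPolynomial.totalDegree_X, MvPolynomial.totalDegree_C]
    have hks : k ≤ s := Nat.lt_succ_iff.mp (Finset.mem_range.mp hk)
    calc k * S.totalDegree ≤ k * 1 := Nat.mul_le_mul_left k hdS
      _ ≤ s := by omega
  have hPolInt := (hpoly Q).1
  have hPolZero := (hpoly Q).2 hdegQ
  -- kernel integrable and Fourier formula
  have hker : Integrable (fun ξ : EuclideanSpace ℝ (Fin n) =>
      Complex.exp (((-(2 * π * ⟪ξ, x⟫) : ℝ) : ℂ) * Complex.I) * a ξ) := by
    apply Integrable.bdd_mul (c := 1) hInt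
    · apply Continuous.aestronglyMeasurable
      exact Complex.continuous_exp.comp
        ((Complex.continuous_ofReal.comp
          ((continuous_const.mul (continuous_id.inner continuous_const)).neg)).mul continuous_const)
    · refine Eventually.of_forall (fun ξ => ?_)
      rw [Complex.norm_exp]
      simp
  have hfour : 𝓕 a x = ∫ ξ : EuclideanSpace ℝ (Fin n),
      Complex.exp (((-(2 * π * ⟪ξ, x⟫) : ℝ) : ℂ) * Complex.I) * a ξ := by
    rw [Real.fourier_eq']
    refine integral_congr_ae (Eventually.of_forall fun ξ => ?_)
    have h2 : (-2 : ℝ) * π * ⟪ξ, x⟫ = -(2 * π * ⟪ξ, x⟫) := by ring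
    simp only [smul_eq_mul, h2]
  -- pointwise bound
  have hpt : ∀ ξ : EuclideanSpace ℝ (Fin n),
      ‖Complex.exp (((-(2 * π * ⟪ξ, x⟫) : ℝ) : ℂ) * Complex.I) * a ξ
        - (MvPolynomial.eval (fun i => ((ξ i : ℝ) : ℂ)) Q) * a ξ‖ ≤ D * ‖a ξ‖ := by
    intro ξ
    by_cases hz : a ξ = 0
    · simp [hz, hD0]
    · have hmem : ξ ∈ B := hsupp hz
      have hrad : ‖ξ - x₀‖ ≤ r := by rwa [Metric.mem_closedBall, dist_eq_norm] at hmem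
      have hsplit : (-(2 * π * ⟪ξ, x⟫) : ℝ) = θ₀ + u ξ := by
        show -(2 * π * ⟪ξ, x⟫) = -(2 * π * ⟪x₀, x⟫) + -(2 * π * ⟪ξ - x₀, x⟫)
        rw [inner_sub_left]; ring
      have hexp : Complex.exp (((-(2 * π * ⟪ξ, x⟫) : ℝ) : ℂ) * Complex.I)
          = c * Complex.exp (((u ξ : ℝ) : ℂ) * Complex.I) := by
        rw [hsplit, hc, ← Complex.exp_add]
        congr 1
        push_cast
        ring
      rw [hexp, hevalQ ξ]
      have hsum : (∑ k ∈ Finset.range (s+1), (((u ξ : ℝ) : ℂ) * Complex.I) ^ k / k.factorial)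
          = ∑ k ∈ Finset.range (s+1), ((u ξ : ℝ) : ℂ) ^ k * Complex.I ^ k / k.factorial := by
        refine Finset.sum_congr rfl fun k _ => ?_
        rw [mul_pow]
      have hfactor : c * Complex.exp (((u ξ : ℝ) : ℂ) * Complex.I) * a ξ
          - c * (∑ k ∈ Finset.range (s+1), ((u ξ : ℝ) : ℂ) ^ k * Complex.I ^ k / k.factorial) * a ξ
          = c * ((Complex.exp (((u ξ : ℝ) : ℂ) * Complex.I)
            - ∑ k ∈ Finset.range (s+1), (((u ξ : ℝ) : ℂ) * Complex.I) ^ k / k.factorial) * a ξ) := by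
        rw [hsum]
        ring
      rw [hfactor, norm_mul, hcnorm, one_mul, norm_mul]
      have htay := exp_I_taylor_bound (s+1) (u ξ)
      have hub : |u ξ| ≤ 2 * π * r * ‖x‖ := by
        rw [hu]
        simp only [abs_neg]
        rw [abs_mul]
        have h1 : |⟪ξ - x₀, x⟫| ≤ ‖ξ - x₀‖ * ‖x‖ := abs_real_inner_le_norm _ _
        have h2 : |2 * π| = 2 * π := abs_of_nonneg (by positivity)
        rw [h2]
        calc 2 * π * |⟪ξ - x₀, x⟫| ≤ 2 * π * (‖ξ - x₀‖ * ‖x‖) := by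
              apply mul_le_mul_of_nonneg_left h1 (by positivity)
          _ ≤ 2 * π * (r * ‖x‖) := by
              apply mul_le_mul_of_nonneg_left _ (by positivity)
              exact mul_le_mul_of_nonneg_right hrad (norm_nonneg _)
          _ = 2 * π * r * ‖x‖ := by ring
      have hDb : |u ξ| ^ (s+1) / (Nat.factorial (s+1)) ≤ D := by
        rw [hD]
        gcongr
      calc ‖Complex.exp (((u ξ : ℝ) : ℂ) * Complex.I)
            - ∑ k ∈ Finset.range (s+1), (((u ξ : ℝ) : ℂ) * Complex.I) ^ k / k.factorial‖ * ‖a ξ‖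
          ≤ (|u ξ| ^ (s+1) / (Nat.factorial (s+1))) * ‖a ξ‖ :=
            mul_le_mul_of_nonneg_right htay (norm_nonneg _)
        _ ≤ D * ‖a ξ‖ := mul_le_mul_of_nonneg_right hDb (norm_nonneg _)
  have hM : ‖𝓕 a x‖ ≤ D * ∫ ξ, ‖a ξ‖ := by
    rw [hfour]
    have hzero : ∫ ξ : EuclideanSpace ℝ (Fin n),
        Complex.exp (((-(2 * π * ⟪ξ, x⟫) : ℝ) : ℂ) * Complex.I) * a ξ
        = ∫ ξ : EuclideanSpace ℝ (Fin n),
          (Complex.exp (((-(2 * π * ⟪ξ, x⟫) : ℝ) : ℂ) * Complex.I) * a ξ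
            - (MvPolynomial.eval (fun i => ((ξ i : ℝ) : ℂ)) Q) * a ξ) := by
      rw [integral_sub hker hPolInt, hPolZero, sub_zero]
    rw [hzero]
    calc ‖∫ ξ : EuclideanSpace ℝ (Fin n),
          (Complex.exp (((-(2 * π * ⟪ξ, x⟫) : ℝ) : ℂ) * Complex.I) * a ξ
            - (MvPolynomial.eval (fun i => ((ξ i : ℝ) : ℂ)) Q) * a ξ)‖
        ≤ ∫ ξ : EuclideanSpace ℝ (Fin n), D * ‖a ξ‖ :=
          norm_integral_le_of_norm_le (hInt.norm.const_mul D) (Eventually.of_forall hpt)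
      _ = D * ∫ ξ, ‖a ξ‖ := integral_const_mul _ _
  have hMENN : (‖𝓕 a x‖₊ : ℝ≥0∞) ≤ eLpNorm a 1 volume * ENNReal.ofReal D := by
    calc (‖𝓕 a x‖₊ : ℝ≥0∞) = ENNReal.ofReal ‖𝓕 a x‖ := (ofReal_norm _).symm
      _ ≤ ENNReal.ofReal (D * ∫ ξ, ‖a ξ‖) := ENNReal.ofReal_le_ofReal hM
      _ = ENNReal.ofReal D * ENNReal.ofReal (∫ ξ, ‖a ξ‖) := ENNReal.ofReal_mul hD0
      _ = ENNReal.ofReal D * eLpNorm a 1 volume := by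
          rw [ofReal_integral_norm_eq_lintegral_enorm hInt, eLpNorm_one_eq_lintegral_enorm]
      _ = eLpNorm a 1 volume * ENNReal.ofReal D := mul_comm _ _
  rcases le_total (1 : ℝ) D with h1 | h1
  · rw [min_eq_left h1]
    calc (‖𝓕 a x‖₊ : ℝ≥0∞) ≤ eLpNorm a 1 volume := hT
      _ ≤ volume B ^ (1 - (q⁻¹).toReal) * eLpNorm a q volume := hC
      _ = volume B ^ (1 - (q⁻¹).toReal) * eLpNorm a q volume * ENNReal.ofReal 1 := by
          simp
  · rw [min_eq_right h1]
    calc (‖𝓕 a x‖₊ : ℝ≥0∞) ≤ eLpNorm a 1 volume * ENNReal.ofReal D := hMENN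
      _ ≤ volume B ^ (1 - (q⁻¹).toReal) * eLpNorm a q volume * ENNReal.ofReal D :=
          mul_le_mul_left hC _
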